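/- Let μ be a finite measure on a set Q, Ψ : Q → [0,∞) measurable, γ > η > 0, M ≥ 1, λ > 0, τ > 0, and suppose (λ/2)^η ≤ M^η (1/μ(Q)) ∫_Q Ψ^η dμ with ∫_Q Ψ^η dμ estimated via the Marcinkiewicz Hölder inequality. If τ > 0 is chosen so that 2^{−η} − M^η τ^η (2γ−η)/(γ−η) ≥ 4^{−η}, then μ(Q) ≤ c(γ, η) (τλ)^{−γ} sup_{μ' ≥ τλ} (μ')^γ · μ({x ∈ Q : Ψ(x) > μ'}). -/

import Mathlib

open MeasureTheory ENNReal Set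

private lemma head_lintegral (η b : ℝ) (hη : 0 < η) (hb : 0 < b) :
    ∫⁻ t in Ioc (0:ℝ) b, ENNReal.ofReal (t ^ (η - 1)) = ENNReal.ofReal (b ^ η / η) := by
  rw [← ofReal_integral_eq_lintegral_ofReal]
  · congr 1
    rw [← intervalIntegral.integral_of_le hb.le,
      integral_rpow (Or.inl (by linarith : (-1:ℝ) < η - 1)),
      Real.zero_rpow (by linarith : η - 1 + 1 ≠ 0)]
    norm_num
  · have := intervalIntegral.intervalIntegrable_rpow' (a := 0) (b := b)
      (r := η - 1) (by linarith)
    have h2 : IntegrableOn (fun x : ℝ => x ^ (η - 1)) (Ioc 0 b) volume := by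
      simpa [intervalIntegrable_iff, uIoc_of_le hb.le] using this
    exact h2
  · filter_upwards [ae_restrict_mem measurableSet_Ioc] with t ht
    exact Real.rpow_nonneg ht.1.le _

private lemma tail_lintegral (p b : ℝ) (hp : p < -1) (hb : 0 < b) :
    ∫⁻ t in Ioi b, ENNReal.ofReal (t ^ p) = ENNReal.ofReal (b ^ (p + 1) / (-(p + 1))) := by
  rw [← ofReal_integral_eq_lintegral_ofReal]
  · rw [integral_Ioi_rpow_of_lt hp hb]
    congr 1
    rw [div_neg, neg_div]
  · exact integrableOn_Ioi_rpow_of_lt hp hb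
  · filter_upwards [ae_restrict_mem measurableSet_Ioi] with t ht
    exact Real.rpow_nonneg (hb.trans ht).le _

/-- Weak-type (Marcinkiewicz) density estimate used in the endpoint case `q = ∞`:
if the `η`-average of `Ψ` over `Q` dominates `(λ/(2M))^η` and `τ` is chosen so that
`2^{-η} - M^η τ^η (2γ-η)/(γ-η) ≥ 4^{-η}`, then `μ(Q)` is controlled by the tail
Marcinkiewicz quantity. -/
theorem density_estimate_marcinkiewicz (γ η : ℝ) (hη : 0 < η) (hγ : η < γ) :
    ∃ c : ℝ≥0∞, c ≠ ⊤ ∧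
      ∀ (X : Type) [MeasurableSpace X] (μ : Measure X) (Q : Set X),
        MeasurableSet Q → 0 < μ Q → μ Q < ⊤ →
        ∀ Ψ : X → ℝ, Measurable Ψ → (∀ x, 0 ≤ Ψ x) →
        ∀ M lam τ : ℝ, 1 ≤ M → 0 < lam → 0 < τ →
        (4:ℝ) ^ (-η) ≤ (2:ℝ) ^ (-η) - M^η * τ^η * ((2*γ - η)/(γ - η)) →
        ENNReal.ofReal (lam/2) ^ η
          ≤ ENNReal.ofReal M ^ η * ((μ Q)⁻¹ * ∫⁻ x in Q, ENNReal.ofReal (Ψ x) ^ η ∂μ) →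
        μ Q ≤ c * ENNReal.ofReal (τ*lam) ^ (-γ) *
          ⨆ m ∈ Ici (τ*lam), ENNReal.ofReal m ^ γ * μ {x | x ∈ Q ∧ m < Ψ x} := by
  have hγη : (0:ℝ) < γ - η := by linarith
  refine ⟨ENNReal.ofReal ((4:ℝ) ^ η * (η / (γ - η))), ENNReal.ofReal_ne_top, ?_⟩
  intro X _ μ Q hQmeas hQ0 hQtop Ψ hΨm hΨ0 M lam τ hM hlam hτ hcond hmain
  set b : ℝ := τ * lam with hbdef
  have hb0 : 0 < b := mul_pos hτ hlam
  set A := ⨆ m ∈ Ici b, ENNReal.ofReal m ^ γ * μ {x | x ∈ Q ∧ m < Ψ x} with hAdef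
  set I := ∫⁻ x in Q, ENNReal.ofReal (Ψ x) ^ η ∂μ with hIdef
  have hM0 : (0:ℝ) < M := lt_of_lt_of_le one_pos hM
  have hK1 : (1:ℝ) ≤ (2*γ - η)/(γ - η) := by
    rw [le_div_iff₀ hγη]; linarith
  have hMτK : M ^ η * τ ^ η ≤ M ^ η * τ ^ η * ((2*γ - η)/(γ - η)) := by
    have h0 : (0:ℝ) < M ^ η * τ ^ η := by positivity
    nlinarith
  have h2le1 : (2:ℝ) ^ (-η) ≤ 1 :=
    Real.rpow_le_one_of_one_le_of_nonpos (by norm_num) (by linarith)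
  have h4pos : (0:ℝ) < (4:ℝ) ^ (-η) := by positivity
  have hMτ1 : M ^ η * τ ^ η ≤ 1 := by nlinarith
  have hCne0 : ENNReal.ofReal ((4:ℝ) ^ η * (η / (γ - η))) ≠ 0 := by
    simp only [ne_eq, ENNReal.ofReal_eq_zero, not_le]
    positivity
  have hbase0 : (0:ℝ≥0∞) < ENNReal.ofReal b ^ (-γ) :=
    ENNReal.rpow_pos (ENNReal.ofReal_pos.mpr hb0) ENNReal.ofReal_ne_top
  rcases eq_or_ne A ⊤ with hAtop | hAtop
  · rw [hAtop, ENNReal.mul_top (mul_ne_zero hCne0 hbase0.ne')]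
    exact le_top
  -- layer cake representation
  have hlayer : I = ENNReal.ofReal η *
      ∫⁻ t in Ioi (0:ℝ), (μ.restrict Q) {a | t < Ψ a} * ENNReal.ofReal (t ^ (η - 1)) := by
    rw [hIdef, ← lintegral_rpow_eq_lintegral_meas_lt_mul (μ.restrict Q)
      (Filter.Eventually.of_forall hΨ0) hΨm.aemeasurable hη]
    exact lintegral_congr fun x => ENNReal.ofReal_rpow_of_nonneg (hΨ0 x) hη.le
  -- pointwise tail bound
  have htail_pt : ∀ t ∈ Ioi b, (μ.restrict Q) {a | t < Ψ a} * ENNReal.ofReal (t ^ (η - 1))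
      ≤ A * ENNReal.ofReal (t ^ (η - 1 - γ)) := by
    intro t ht
    have ht0 : 0 < t := hb0.trans ht
    have hset : (μ.restrict Q) {a | t < Ψ a} = μ {x | x ∈ Q ∧ t < Ψ x} := by
      rw [Measure.restrict_apply (measurableSet_lt measurable_const hΨm)]
      congr 1
      ext x
      simp [mem_setOf_eq, and_comm]
    have hAle : ENNReal.ofReal t ^ γ * μ {x | x ∈ Q ∧ t < Ψ x} ≤ A :=
      le_iSup₂ (f := fun m (_ : m ∈ Ici b) =>
        ENNReal.ofReal m ^ γ * μ {x | x ∈ Q ∧ m < Ψ x}) t (mem_Ici.mpr ht.le)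
    have hpow0 : ENNReal.ofReal t ^ γ ≠ 0 :=
      (ENNReal.rpow_pos (ENNReal.ofReal_pos.mpr ht0) ENNReal.ofReal_ne_top).ne'
    have hpowt : ENNReal.ofReal t ^ γ ≠ ⊤ :=
      ENNReal.rpow_ne_top_of_nonneg (by linarith) ENNReal.ofReal_ne_top
    have hμle : (μ.restrict Q) {a | t < Ψ a} ≤ ENNReal.ofReal (t ^ (-γ)) * A := by
      rw [hset, ← ENNReal.ofReal_rpow_of_pos ht0, ENNReal.rpow_neg]
      calc μ {x | x ∈ Q ∧ t < Ψ x}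
          = (ENNReal.ofReal t ^ γ)⁻¹ * (ENNReal.ofReal t ^ γ * μ {x | x ∈ Q ∧ t < Ψ x}) := by
            rw [← mul_assoc, ENNReal.inv_mul_cancel hpow0 hpowt, one_mul]
        _ ≤ (ENNReal.ofReal t ^ γ)⁻¹ * A := mul_le_mul_right hAle _
    calc (μ.restrict Q) {a | t < Ψ a} * ENNReal.ofReal (t ^ (η - 1))
        ≤ (ENNReal.ofReal (t ^ (-γ)) * A) * ENNReal.ofReal (t ^ (η - 1)) :=
          mul_le_mul_left hμle _
      _ = A * (ENNReal.ofReal (t ^ (-γ)) * ENNReal.ofReal (t ^ (η - 1))) := by ring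
      _ = A * ENNReal.ofReal (t ^ (η - 1 - γ)) := by
          rw [← ENNReal.ofReal_mul (Real.rpow_nonneg ht0.le _), ← Real.rpow_add ht0,
            show -γ + (η - 1) = η - 1 - γ by ring]
  -- split the layer cake integral
  have hsplit : ∫⁻ t in Ioi (0:ℝ), (μ.restrict Q) {a | t < Ψ a} * ENNReal.ofReal (t ^ (η - 1))
      ≤ μ Q * ENNReal.ofReal (b ^ η / η) + A * ENNReal.ofReal (b ^ (η - γ) / (γ - η)) := by
    rw [← Ioc_union_Ioi_eq_Ioi hb0.le,
      lintegral_union measurableSet_Ioi (Ioc_disjoint_Ioi le_rfl)]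
    refine add_le_add ?_ ?_
    · calc ∫⁻ t in Ioc (0:ℝ) b, (μ.restrict Q) {a | t < Ψ a} * ENNReal.ofReal (t ^ (η - 1))
          ≤ ∫⁻ t in Ioc (0:ℝ) b, μ Q * ENNReal.ofReal (t ^ (η - 1)) := by
            refine lintegral_mono fun t => mul_le_mul_left ?_ _
            exact (measure_mono (subset_univ _)).trans_eq (by rw [Measure.restrict_apply_univ])
        _ = μ Q * ∫⁻ t in Ioc (0:ℝ) b, ENNReal.ofReal (t ^ (η - 1)) :=
            lintegral_const_mul' _ _ hQtop.ne
        _ = μ Q * ENNReal.ofReal (b ^ η / η) := by rw [head_lintegral η b hη hb0]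
    · calc ∫⁻ t in Ioi b, (μ.restrict Q) {a | t < Ψ a} * ENNReal.ofReal (t ^ (η - 1))
          ≤ ∫⁻ t in Ioi b, A * ENNReal.ofReal (t ^ (η - 1 - γ)) := by
            refine lintegral_mono_ae ?_
            filter_upwards [ae_restrict_mem measurableSet_Ioi] with t ht
            exact htail_pt t ht
        _ = A * ∫⁻ t in Ioi b, ENNReal.ofReal (t ^ (η - 1 - γ)) :=
            lintegral_const_mul' _ _ hAtop
        _ = A * ENNReal.ofReal (b ^ (η - γ) / (γ - η)) := by
            rw [tail_lintegral (η - 1 - γ) b (by linarith) hb0,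
              show η - 1 - γ + 1 = η - γ by ring, show -(η - γ) = γ - η by ring]
  -- combine
  have hI : I ≤ ENNReal.ofReal (b ^ η) * μ Q
      + ENNReal.ofReal (η * (b ^ (η - γ) / (γ - η))) * A := by
    rw [hlayer]
    calc ENNReal.ofReal η *
        ∫⁻ t in Ioi (0:ℝ), (μ.restrict Q) {a | t < Ψ a} * ENNReal.ofReal (t ^ (η - 1))
        ≤ ENNReal.ofReal η *
          (μ Q * ENNReal.ofReal (b ^ η / η) + A * ENNReal.ofReal (b ^ (η - γ) / (γ - η))) :=
          mul_le_mul_right hsplit _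
      _ = ENNReal.ofReal (η * (b ^ η / η)) * μ Q
          + ENNReal.ofReal (η * (b ^ (η - γ) / (γ - η))) * A := by
          rw [mul_add]
          congr 1
          · rw [show ENNReal.ofReal η * (μ Q * ENNReal.ofReal (b ^ η / η))
              = ENNReal.ofReal η * ENNReal.ofReal (b ^ η / η) * μ Q by ring,
              ← ENNReal.ofReal_mul hη.le]
          · rw [show ENNReal.ofReal η * (A * ENNReal.ofReal (b ^ (η - γ) / (γ - η)))
              = ENNReal.ofReal η * ENNReal.ofReal (b ^ (η - γ) / (γ - η)) * A by ring,
              ← ENNReal.ofReal_mul hη.le]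
      _ = ENNReal.ofReal (b ^ η) * μ Q
          + ENNReal.ofReal (η * (b ^ (η - γ) / (γ - η))) * A := by
          rw [show η * (b ^ η / η) = b ^ η by field_simp]
  -- use the main hypothesis
  have hmain' : ENNReal.ofReal ((lam/2) ^ η) * μ Q ≤ ENNReal.ofReal (M ^ η) * I := by
    have h1 : ENNReal.ofReal (lam/2) ^ η = ENNReal.ofReal ((lam/2) ^ η) :=
      ENNReal.ofReal_rpow_of_pos (by positivity)
    have h2 : ENNReal.ofReal M ^ η = ENNReal.ofReal (M ^ η) :=
      ENNReal.ofReal_rpow_of_pos hM0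
    calc ENNReal.ofReal ((lam/2) ^ η) * μ Q
        ≤ (ENNReal.ofReal (M ^ η) * ((μ Q)⁻¹ * I)) * μ Q := by
          rw [← h1, ← h2]; exact mul_le_mul_left hmain _
      _ = ENNReal.ofReal (M ^ η) * I := by
          rw [mul_assoc, mul_comm ((μ Q)⁻¹ * I), ← mul_assoc (μ Q),
            ENNReal.mul_inv_cancel hQ0.ne' hQtop.ne, one_mul]
  have hchain : ENNReal.ofReal ((lam/2) ^ η) * μ Q
      ≤ ENNReal.ofReal (M ^ η * b ^ η) * μ Q
        + ENNReal.ofReal (M ^ η * (η * (b ^ (η - γ) / (γ - η)))) * A := by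
    refine hmain'.trans ?_
    calc ENNReal.ofReal (M ^ η) * I
        ≤ ENNReal.ofReal (M ^ η) * (ENNReal.ofReal (b ^ η) * μ Q
            + ENNReal.ofReal (η * (b ^ (η - γ) / (γ - η))) * A) := mul_le_mul_right hI _
      _ = _ := by
          rw [mul_add, ← mul_assoc, ← mul_assoc,
            ← ENNReal.ofReal_mul (by positivity), ← ENNReal.ofReal_mul (by positivity)]
  -- key real inequality
  have e4 : (lam/4) ^ η = (4:ℝ) ^ (-η) * lam ^ η := by
    rw [show lam/4 = (4:ℝ)⁻¹ * lam by ring, Real.mul_rpow (by norm_num) hlam.le,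
      Real.inv_rpow (by norm_num), ← Real.rpow_neg (by norm_num)]
  have e2 : (lam/2) ^ η = (2:ℝ) ^ (-η) * lam ^ η := by
    rw [show lam/2 = (2:ℝ)⁻¹ * lam by ring, Real.mul_rpow (by norm_num) hlam.le,
      Real.inv_rpow (by norm_num), ← Real.rpow_neg (by norm_num)]
  have eb : b ^ η = τ ^ η * lam ^ η := Real.mul_rpow hτ.le hlam.le
  have hlη : (0:ℝ) < lam ^ η := Real.rpow_pos_of_pos hlam η
  have hkeyR : (4:ℝ) ^ (-η) + M ^ η * τ ^ η ≤ (2:ℝ) ^ (-η) := by linarith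
  have hR1 : (lam/4) ^ η + M ^ η * b ^ η ≤ (lam/2) ^ η := by
    rw [e4, e2, eb]
    nlinarith [mul_le_mul_of_nonneg_right hkeyR hlη.le]
  -- cancellation
  have hkey2 : ENNReal.ofReal ((lam/4) ^ η) * μ Q
      ≤ ENNReal.ofReal (M ^ η * (η * (b ^ (η - γ) / (γ - η)))) * A := by
    have hstep : ENNReal.ofReal (M ^ η * b ^ η) * μ Q + ENNReal.ofReal ((lam/4) ^ η) * μ Q
        ≤ ENNReal.ofReal (M ^ η * b ^ η) * μ Q
          + ENNReal.ofReal (M ^ η * (η * (b ^ (η - γ) / (γ - η)))) * A := by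
      calc ENNReal.ofReal (M ^ η * b ^ η) * μ Q + ENNReal.ofReal ((lam/4) ^ η) * μ Q
          = ENNReal.ofReal (M ^ η * b ^ η + (lam/4) ^ η) * μ Q := by
            rw [ENNReal.ofReal_add (by positivity) (by positivity), add_mul]
        _ ≤ ENNReal.ofReal ((lam/2) ^ η) * μ Q :=
            mul_le_mul_left (ENNReal.ofReal_le_ofReal (by linarith)) _
        _ ≤ _ := hchain
    exact (ENNReal.add_le_add_iff_left
      (ENNReal.mul_ne_top ENNReal.ofReal_ne_top hQtop.ne)).mp hstep
  -- solve for μ Q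
  have hlam4 : (0:ℝ) < (lam/4) ^ η := Real.rpow_pos_of_pos (by positivity) η
  have hfin : μ Q ≤ ENNReal.ofReal (((lam/4) ^ η)⁻¹
      * (M ^ η * (η * (b ^ (η - γ) / (γ - η))))) * A := by
    rw [ENNReal.ofReal_mul (by positivity), ENNReal.ofReal_inv_of_pos hlam4]
    calc μ Q
        = (ENNReal.ofReal ((lam/4) ^ η))⁻¹ * (ENNReal.ofReal ((lam/4) ^ η) * μ Q) := by
          rw [← mul_assoc, ENNReal.inv_mul_cancel
            (ENNReal.ofReal_pos.mpr hlam4).ne' ENNReal.ofReal_ne_top, one_mul]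
      _ ≤ (ENNReal.ofReal ((lam/4) ^ η))⁻¹
          * (ENNReal.ofReal (M ^ η * (η * (b ^ (η - γ) / (γ - η)))) * A) :=
          mul_le_mul_right hkey2 _
      _ = _ := by rw [mul_assoc]
  -- final real estimate
  have hR2 : ((lam/4) ^ η)⁻¹ * (M ^ η * (η * (b ^ (η - γ) / (γ - η))))
      ≤ (4:ℝ) ^ η * (η / (γ - η)) * b ^ (-γ) := by
    have ebg : b ^ (η - γ) = τ ^ η * lam ^ η * b ^ (-γ) := by
      rw [show η - γ = η + -γ by ring, Real.rpow_add hb0, eb]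
    have h4inv : (((4:ℝ) ^ (-η))⁻¹ : ℝ) = (4:ℝ) ^ η := by
      rw [Real.rpow_neg (by norm_num), inv_inv]
    have hbγ : (0:ℝ) ≤ b ^ (-γ) := Real.rpow_nonneg hb0.le _
    have heq : ((lam/4) ^ η)⁻¹ * (M ^ η * (η * (b ^ (η - γ) / (γ - η))))
        = (M ^ η * τ ^ η) * ((4:ℝ) ^ η * (η / (γ - η)) * b ^ (-γ)) := by
      rw [e4, ebg, mul_inv, h4inv]
      field_simp
    rw [heq]
    have hX : (0:ℝ) ≤ (4:ℝ) ^ η * (η / (γ - η)) * b ^ (-γ) := by positivity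
    nlinarith [mul_le_mul_of_nonneg_right hMτ1 hX]
  calc μ Q
      ≤ ENNReal.ofReal (((lam/4) ^ η)⁻¹
          * (M ^ η * (η * (b ^ (η - γ) / (γ - η))))) * A := hfin
    _ ≤ ENNReal.ofReal ((4:ℝ) ^ η * (η / (γ - η)) * b ^ (-γ)) * A :=
        mul_le_mul_left (ENNReal.ofReal_le_ofReal hR2) _
    _ = ENNReal.ofReal ((4:ℝ) ^ η * (η / (γ - η))) * ENNReal.ofReal b ^ (-γ) * A := by
        rw [ENNReal.ofReal_mul (by positivity), ← ENNReal.ofReal_rpow_of_pos hb0]
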